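/- For every μ ∈ ℂ and all integers ℓ ≥ 0 and d ≥ 0, the following identity of polynomials in t holds: (∏_{i=1}^{d} (μ+⌊(ℓ+1)/2⌋-i)) · C̃_ℓ^μ(it) = Σ_{s=0}^{d} binom(d,s) (∏_{i=0}^{s-1} (μ+ℓ-d+i)) C̃_{ℓ+2(s-d)}^{μ-s}(it), where C̃_{ℓ'}^{μ'} := 0 whenever ℓ' < 0. -/

import Mathlib

noncomputable section

open Polynomial Finset

/-- The space `Pol_b[t]_even`: span of the monomials `t^(b-2i)`, `0 ≤ i ≤ ⌊b/2⌋`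
(zero space when `b < 0`). -/
def polEven (b : ℤ) (f : ℂ[X]) : Prop :=
  ∀ n : ℕ, f.coeff n ≠ 0 → (n : ℤ) ≤ b ∧ (2 : ℤ) ∣ (b - n)

/-- Imaginary Gegenbauer operator `S_ℓ^μ`. -/
def gegenS (μ : ℂ) (ℓ : ℤ) (f : ℂ[X]) : ℂ[X] :=
  -((1 + X ^ 2) * derivative (derivative f)
      + (1 + 2 * C μ) * X * derivative f
      - C ((ℓ : ℂ) * ((ℓ : ℂ) + 2 * μ)) * f)

/-- Euler operator `ϑ_t`. -/
def euler (f : ℂ[X]) : ℂ[X] := X * derivative f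

/-- Renormalized Gegenbauer polynomial `C̃_n^μ(z)` for a natural number degree `n`. -/
def gegenC (μ : ℂ) (n : ℕ) : ℂ[X] :=
  ∑ k ∈ range (n / 2 + 1),
    C ((-1 : ℂ) ^ k / ((k.factorial : ℂ) * ((n - 2 * k).factorial : ℂ)) *
        ∏ s ∈ range (n / 2 - k), (μ + (((n + 1) / 2 : ℕ) : ℂ) + (s : ℂ))) *
      (C 2 * X) ^ (n - 2 * k)

/-- `C̃_ℓ^μ(z)` for `ℓ : ℤ` (zero for `ℓ < 0`). -/
def gegenCZ (μ : ℂ) (ℓ : ℤ) : ℂ[X] := if 0 ≤ ℓ then gegenC μ ℓ.toNat else 0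

/-- `C̃_ℓ^μ(it)`: substitution `z = it`. -/
def gegenCit (μ : ℂ) (ℓ : ℤ) : ℂ[X] := (gegenCZ μ ℓ).comp (C Complex.I * X)

/-- `γ(μ, ℓ)`. -/
def gam (μ : ℂ) (ℓ : ℤ) : ℂ := if ℓ % 2 = 0 then μ + ((ℓ / 2 : ℤ) : ℂ) else 1

/-- `Γ(x+k)/Γ(x)` interpreted as a finite product (reciprocal for `k < 0`). -/
def gratio (x : ℂ) (k : ℤ) : ℂ :=
  if 0 ≤ k then ∏ i ∈ range k.toNat, (x + (i : ℂ))
  else (∏ i ∈ range (-k).toNat, (x + (k : ℂ) + (i : ℂ)))⁻¹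

/-- `Γ(z₁)/Γ(z₂)` at integer arguments, as a finite product. -/
def gq (z₁ z₂ : ℤ) : ℂ := gratio (z₂ : ℂ) (z₁ - z₂)

/-- The set `Λ(N,a,m)`, regarded as a subset of `ℂ`. -/
def LambdaSet (N a : ℕ) (m : ℤ) : Set ℂ :=
  { x | ∃ q : ℤ, max 0 ((N : ℤ) - a + m) ≤ q ∧ q ≤ 2 * N ∧
      x = (N : ℂ) + 1 - (a : ℂ) - (q : ℂ) }

/-- The set `M_ℓ^k`, regarded as a subset of `ℂ`. -/
def Mset (ℓ k : ℤ) : Set ℂ :=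
  { x | ∃ d : ℤ, 0 ≤ d ∧ d ≤ ℓ / 2 - k - 1 ∧ x = -(((ℓ + 1) / 2 : ℤ) : ℂ) - (d : ℂ) }

/-- The solution space `Ξ(λ,a,N,m)` of the system (A_j^±), (B_j^±), realized as
the set of tuples `(f_{-N},…,f_N)`, encoded as functions `ℤ → ℂ[X]` vanishing for `|j| > N`. -/
def XiSet (lam : ℂ) (a N : ℕ) (m : ℤ) : Set (ℤ → ℂ[X]) :=
  { f |
    (∀ j : ℤ, (N : ℤ) < |j| → f j = 0) ∧
    (∀ j : ℤ, |j| ≤ (N : ℤ) → polEven ((a : ℤ) - m + j) (f j)) ∧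
    (∀ j : ℤ, 0 ≤ j → j ≤ (N : ℤ) →
      gegenS (lam + (j : ℂ) - 1) ((a : ℤ) + m - j) (f j)
        - C (2 * ((N : ℂ) - (j : ℂ))) * derivative (f (j + 1)) = 0) ∧
    (∀ j : ℤ, 0 ≤ j → j ≤ (N : ℤ) →
      gegenS (lam + (j : ℂ) - 1) ((a : ℤ) - m - j) (f (-j))
        + C (2 * ((N : ℂ) - (j : ℂ))) * derivative (f (-j - 1)) = 0) ∧
    (∀ j : ℤ, 1 ≤ j → j ≤ (N : ℤ) →
      C (2 * (-(m : ℂ)) * (lam + (a : ℂ) - 1)) * f j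
        + C (2 * (j : ℂ)) * (C (lam - 1) * f j + euler (f j))
        + C ((N : ℂ) - (j : ℂ)) * derivative (f (j + 1))
        + C ((N : ℂ) + (j : ℂ)) * derivative (f (j - 1)) = 0) ∧
    (∀ j : ℤ, 1 ≤ j → j ≤ (N : ℤ) →
      C (2 * (m : ℂ) * (lam + (a : ℂ) - 1)) * f (-j)
        + C (2 * (j : ℂ)) * (C (lam - 1) * f (-j) + euler (f (-j)))
        - C ((N : ℂ) + (j : ℂ)) * derivative (f (-j + 1))
        - C ((N : ℂ) - (j : ℂ)) * derivative (f (-j - 1)) = 0) }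

/-- The constant `C_{j,r}^+`. -/
def Cp (lam : ℂ) (a N : ℕ) (m : ℤ) (j r : ℕ) : ℂ :=
  ((N - j).choose r : ℂ) * (((2 * N - r).factorial : ℂ) / ((N + j).factorial : ℂ)) *
    (∏ i ∈ range r, ((N : ℂ) - (m : ℂ) - (i : ℂ))) *
    (∏ i ∈ range r, (lam + (a : ℂ) - (N : ℂ) - 1 + (i : ℂ)))

/-- The constant `C_{j,r}^-`. -/
def Cm (lam : ℂ) (a N : ℕ) (m : ℤ) (j r : ℕ) : ℂ :=
  ((N - j).choose r : ℂ) * (((2 * N - r).factorial : ℂ) / ((N + j).factorial : ℂ)) *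
    (∏ i ∈ range r, ((N : ℂ) + (m : ℂ) - (i : ℂ))) *
    (∏ i ∈ range r, (lam + (a : ℂ) - (N : ℂ) - 1 + (i : ℂ)))

/-- The gamma factor `Γ_j^+`. -/
def GammaP (lam : ℂ) (a N : ℕ) (m : ℤ) (j : ℕ) : ℂ :=
  ∏ d ∈ range (N - j), gam (lam + (N : ℂ) - 1) ((a : ℤ) + m - (N : ℤ) - ((d : ℤ) + 1))

/-- The gamma factor `Γ_j^-`. -/
def GammaM (lam : ℂ) (a N : ℕ) (m : ℤ) (j : ℕ) : ℂ :=
  ∏ d ∈ range (N - j), gam (lam + (N : ℂ) - 1) ((a : ℤ) - m - (N : ℤ) - ((d : ℤ) + 1))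

/-- The constant `D_{j,r}` (with parameter `q`). -/
def Dc (N : ℕ) (m q : ℤ) (j r : ℕ) : ℂ :=
  ((N - j).choose r : ℂ) * (((2 * N - r).factorial : ℂ) / ((N + j).factorial : ℂ)) *
    (∏ i ∈ range r, ((N : ℂ) + (m : ℂ) - (i : ℂ))) *
    (∏ i ∈ range r, ((q : ℂ) - 2 * (N : ℂ) + (i : ℂ)))

/-- Binomial coefficient with integer upper argument: `binom(x,k) = (∏_{i<k}(x-i))/k!`. -/
def zbinom (x : ℤ) (k : ℕ) : ℂ := (∏ i ∈ range k, ((x : ℂ) - (i : ℂ))) / (k.factorial : ℂ)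

/-- The gamma factor `Γ(d,r)` of the paper (for integral `λ = λz`, `ν = νz`). -/
def GammaAB (N : ℕ) (m lamz nuz : ℤ) (d r : ℕ) : ℂ :=
  (d.choose r : ℂ) *
    gq (lamz + (nuz - lamz - m + (N : ℤ) - (d : ℤ) - 1) / 2)
       (lamz + (nuz - lamz - m - 1) / 2) *
    (((2 * N - r).factorial : ℂ) / (N.factorial : ℂ)) *
    (∏ i ∈ range r, ((N : ℂ) + (m : ℂ) - (i : ℂ)))

/-- The constant `A(d,r)` of the paper (for integral `λ = λz`, `ν = νz`). -/
def Acoef (N : ℕ) (m lamz nuz : ℤ) (d r : ℕ) : ℂ :=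
  (-1 : ℂ) ^ (nuz - 1) * GammaAB N m lamz nuz d r *
    gq (lamz + (-nuz - lamz - m + (N : ℤ) - (d : ℤ) + 1) / 2)
       (lamz + (nuz - lamz - m + (N : ℤ) - (d : ℤ) - 1) / 2) *
    ∏ i ∈ range r, ((N : ℂ) + (nuz : ℂ) - ((i : ℂ) + 1))

/-- The constant `B(d,r)` of the paper (for integral `λ = λz`, `ν = νz`). -/
def Bcoef (N : ℕ) (m lamz nuz : ℤ) (d r : ℕ) : ℂ :=
  (-1 : ℂ) ^ ((d : ℤ) - (N : ℤ)) * GammaAB N m lamz nuz (2 * N - d) r *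
    ∏ i ∈ range r, ((N : ℂ) - (nuz : ℂ) + 2 - ((i : ℂ) + 1))

/-- The predicate `(E_j^+)` on `f_j`. -/
def Eplus (lam : ℂ) (a N : ℕ) (m : ℤ) (qp : ℂ) (j : ℕ) (fj : ℂ[X]) : Prop :=
  C ((-Complex.I) ^ (N - j) * (((2 * N).factorial : ℂ) / ((N + j).factorial : ℂ)) *
      GammaP lam a N m j) * fj
    = C qp * ∑ r ∈ range (N - j + 1),
        C (Cp lam a N m j r) *
          gegenCit (lam + (N : ℂ) - 1 - (r : ℂ)) ((a : ℤ) + m - 2 * (N : ℤ) + (j : ℤ) + 2 * (r : ℤ))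

/-- The predicate `(E_j^-)` on `f_{-j}`. -/
def Eminus (lam : ℂ) (a N : ℕ) (m : ℤ) (qm : ℂ) (j : ℕ) (fj : ℂ[X]) : Prop :=
  C (Complex.I ^ (N - j) * (((2 * N).factorial : ℂ) / ((N + j).factorial : ℂ)) *
      GammaM lam a N m j) * fj
    = C qm * ∑ r ∈ range (N - j + 1),
        C (Cm lam a N m j r) *
          gegenCit (lam + (N : ℂ) - 1 - (r : ℂ)) ((a : ℤ) - m - 2 * (N : ℤ) + (j : ℤ) + 2 * (r : ℤ))

/-- The constant `C_{0,r}(m')` with integer parameter `a`. -/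
def C0r (lam : ℂ) (N : ℕ) (a m' : ℤ) (r : ℕ) : ℂ :=
  (N.choose r : ℂ) * (((2 * N - r).factorial : ℂ) / (N.factorial : ℂ)) *
    (∏ i ∈ range r, ((N : ℂ) - (m' : ℂ) - (i : ℂ))) *
    (∏ i ∈ range r, (lam + (a : ℂ) - (N : ℂ) - 1 + (i : ℂ)))

/-- `α(λ,N,a,m')`. -/
def alphaF (lam : ℂ) (N : ℕ) (a m' : ℤ) : ℂ :=
  ∑ r ∈ range (N + 1), (-1 : ℂ) ^ r * C0r lam N a m' r *
    ∏ i ∈ range (N - r), ((((a + m') / 2 : ℤ) : ℂ) - ((i : ℂ) + 1))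

/-- `β(λ,N,a,m')`. -/
def betaF (lam : ℂ) (N : ℕ) (a m' : ℤ) : ℂ :=
  ∑ r ∈ range (N + 1), (-1 : ℂ) ^ r * C0r lam N a m' r *
    ∏ i ∈ range (N - r), ((((a + m' + 2) / 2 : ℤ) : ℂ) - ((i : ℂ) + 1))

/-- The polynomial function `P(λ)`. -/
def Pf (N : ℕ) (a m : ℤ) (lam : ℂ) : ℂ :=
  (lam + (((a + m - 1) / 2 : ℤ) : ℂ)) * (((a + m) / 2 : ℤ) : ℂ) *
      alphaF lam N a m * betaF lam N a (-m)
    - (lam + (((a - m - 1) / 2 : ℤ) : ℂ)) * (((a - m) / 2 : ℤ) : ℂ) *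
      alphaF lam N a (-m) * betaF lam N a m

/-- The polynomial function `Q(λ)`. -/
def Qf (N : ℕ) (a m : ℤ) (lam : ℂ) : ℂ :=
  (∏ i ∈ range (N + 1), ((m : ℂ) + (i : ℂ))) *
    (∏ i ∈ range N, (((i : ℂ) + 1) - (m : ℂ))) *
    ∏ q ∈ range (2 * N + 1), (lam - (N : ℂ) - 1 + (a : ℂ) + (q : ℂ))

/-- `α̃(a,m')`. -/
def alphaTilde (N q : ℕ) (a m' : ℤ) : ℂ :=
  ∑ r ∈ range (min q N + 1),
    (N.choose r : ℂ) * (((2 * N - r).factorial : ℂ) / ((2 * N - q).factorial : ℂ)) *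
      ((q.factorial : ℂ) / ((q - r).factorial : ℂ)) *
      (∏ i ∈ range r, ((N : ℂ) - (m' : ℂ) - (i : ℂ))) *
      (∏ i ∈ Finset.Ico r q, ((((a + m') / 2 : ℤ) : ℂ) - (N : ℂ) + (i : ℂ)))

/-- The explicit generating tuple of `Ξ(λ,a,N,m)` of Theorem 4.3 (statement 1). -/
def F1 (N a : ℕ) (m q : ℤ) : ℤ → ℂ[X] := fun j =>
  let lamz : ℤ := (N : ℤ) + 1 - a - q
  let nuz : ℤ := (N : ℤ) + 1 - q
  let lam : ℂ := (lamz : ℂ)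
  if 1 ≤ j ∧ j ≤ (N : ℤ) then
    C (Complex.I ^ (-j) * (-1 : ℂ) ^ (nuz - 1)) *
      ∑ r ∈ range (N - j.toNat + 1),
        C ((-1 : ℂ) ^ r * Acoef N m lamz nuz (N - j.toNat) r) *
          gegenCit (lam + (N : ℂ) - 1 - (r : ℂ))
            ((a : ℤ) - m + j + 2 * (1 - (N : ℤ) - nuz + (r : ℤ)))
  else if -(N : ℤ) ≤ j ∧ j ≤ 0 then
    C (Complex.I ^ j) *
      ∑ r ∈ range (N - (-j).toNat + 1),
        C ((-1 : ℂ) ^ r * Bcoef N m lamz nuz (N + (-j).toNat) r) *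
          gegenCit (lam + (N : ℂ) - 1 - (r : ℂ))
            ((a : ℤ) - m + (-j) - 2 * (N : ℤ) + 2 * (r : ℤ))
  else 0

/-- The explicit tuple of statement 16. -/
def F16 (N a : ℕ) (m q : ℤ) : ℤ → ℂ[X] := fun j =>
  let lam : ℂ := (N : ℂ) + 1 - (a : ℂ) - (q : ℂ)
  if 1 ≤ j ∧ j ≤ (N : ℤ) then
    C ((-Complex.I) ^ j.toNat * (((N + j.toNat).factorial : ℂ) / (N.factorial : ℂ)) *
        gratio (lam + ((((a : ℤ) - m - 1) / 2 : ℤ) : ℂ))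
          (((a : ℤ) - m + j - 1) / 2 + q - (N : ℤ) - ((a : ℤ) - m - 1) / 2)) *
      ∑ r ∈ range (N - j.toNat + 1),
        C (Dc N m q j.toNat r) *
          gegenCit (lam + (N : ℂ) - 1 - (r : ℂ))
            ((a : ℤ) - m + j + 2 * (q - 2 * (N : ℤ) + (r : ℤ)))
  else if -(N : ℤ) ≤ j ∧ j ≤ 0 then
    C (Complex.I ^ (-j).toNat * (((N + (-j).toNat).factorial : ℂ) / (N.factorial : ℂ)) *
        gratio (lam + ((((a : ℤ) - m - 1) / 2 : ℤ) : ℂ))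
          (((a : ℤ) - m + (-j) - 1) / 2 - ((a : ℤ) - m - 1) / 2)) *
      ∑ r ∈ range (N - (-j).toNat + 1),
        C (Cm lam a N m (-j).toNat r) *
          gegenCit (lam + (N : ℂ) - 1 - (r : ℂ))
            ((a : ℤ) - m - 2 * (N : ℤ) + (-j) + 2 * (r : ℤ))
  else 0


section Stmt19Aux

private lemma aux_prod_shift (x : ℂ) (r : ℕ) :
    x * ∏ s ∈ range r, (x + 1 + (s : ℂ)) = (∏ s ∈ range r, (x + (s : ℂ))) * (x + (r : ℂ)) := by
  have h1 := Finset.prod_range_succ (fun s : ℕ => x + (s : ℂ)) r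
  have h2 := Finset.prod_range_succ' (fun s : ℕ => x + (s : ℂ)) r
  rw [h2] at h1
  have h3 : (∏ s ∈ range r, (x + ((s : ℂ) + 1))) = ∏ s ∈ range r, (x + 1 + (s : ℂ)) := by
    refine Finset.prod_congr rfl fun s _ => by push_cast; ring
  push_cast at h1
  rw [h3] at h1
  calc x * ∏ s ∈ range r, (x + 1 + (s : ℂ))
      = (∏ s ∈ range r, (x + 1 + (s : ℂ))) * (x + 0) := by ring
    _ = _ := h1

private lemma aux_key_scalar (μ : ℂ) (n k : ℕ) (hk : k ≤ n / 2 + 1) (c : ℂ) :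
    (μ + (((n + 3) / 2 : ℕ) : ℂ) - 1) *
        (c * ∏ s ∈ range (n / 2 + 1 - k), (μ + (((n + 3) / 2 : ℕ) : ℂ) + (s : ℂ)))
      - (μ + ((n : ℂ) + 2) - 1) *
        (c * ∏ s ∈ range (n / 2 + 1 - k), (μ - 1 + (((n + 3) / 2 : ℕ) : ℂ) + (s : ℂ)))
      = (-(k : ℂ)) * (c * ∏ s ∈ range (n / 2 + 1 - k), (μ - 1 + (((n + 3) / 2 : ℕ) : ℂ) + (s : ℂ))) := by
  set x : ℂ := μ - 1 + (((n + 3) / 2 : ℕ) : ℂ) with hx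
  have e1 : (∏ s ∈ range (n / 2 + 1 - k), (μ + (((n + 3) / 2 : ℕ) : ℂ) + (s : ℂ)))
      = ∏ s ∈ range (n / 2 + 1 - k), (x + 1 + (s : ℂ)) :=
    Finset.prod_congr rfl fun s _ => by rw [hx]; ring
  have e2 : (∏ s ∈ range (n / 2 + 1 - k), (μ - 1 + (((n + 3) / 2 : ℕ) : ℂ) + (s : ℂ)))
      = ∏ s ∈ range (n / 2 + 1 - k), (x + (s : ℂ)) :=
    Finset.prod_congr rfl fun s _ => by rw [hx]
  have hp := aux_prod_shift x (n / 2 + 1 - k)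
  have hnat : (n + 3) / 2 + (n / 2 + 1 - k) + k = n + 2 := by omega
  have hr : x + ((n / 2 + 1 - k : ℕ) : ℂ) = μ + (n : ℂ) + 1 - (k : ℂ) := by
    have : ((((n + 3) / 2 + (n / 2 + 1 - k) + k : ℕ)) : ℂ) = ((n + 2 : ℕ) : ℂ) := by
      exact_mod_cast congrArg (Nat.cast : ℕ → ℂ) hnat
    push_cast at this
    rw [hx]; linear_combination this
  rw [e1, e2]
  have hx' : μ + (((n + 3) / 2 : ℕ) : ℂ) - 1 = x := by rw [hx]; ring
  rw [hx']
  linear_combination c * hp + c * (∏ s ∈ range (n / 2 + 1 - k), (x + (s : ℂ))) * hr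

private lemma aux_key_poly (μ : ℂ) (n k : ℕ) (hk : k ≤ n / 2 + 1) (c : ℂ) (P : ℂ[X]) :
    C (μ + (((n + 3) / 2 : ℕ) : ℂ) - 1) *
        (C (c * ∏ s ∈ range (n / 2 + 1 - k), (μ + (((n + 3) / 2 : ℕ) : ℂ) + (s : ℂ))) * P)
      - C (μ + ((n : ℂ) + 2) - 1) *
        (C (c * ∏ s ∈ range (n / 2 + 1 - k), (μ - 1 + (((n + 3) / 2 : ℕ) : ℂ) + (s : ℂ))) * P)
      = C ((-(k : ℂ)) * (c * ∏ s ∈ range (n / 2 + 1 - k), (μ - 1 + (((n + 3) / 2 : ℕ) : ℂ) + (s : ℂ)))) * P := by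
  rw [← mul_assoc, ← mul_assoc, ← C_mul, ← C_mul, ← sub_mul, ← C_sub, aux_key_scalar μ n k hk c]

private lemma aux_base_nat (μ : ℂ) (ℓ : ℕ) :
    C (μ + (((ℓ + 1) / 2 : ℕ) : ℂ) - 1) * gegenC μ ℓ
      = gegenCZ μ ((ℓ : ℤ) - 2) + C (μ + (ℓ : ℂ) - 1) * gegenC (μ - 1) ℓ := by
  match ℓ with
  | 0 => norm_num [gegenC, gegenCZ]
  | 1 => norm_num [gegenC, gegenCZ]
  | (n + 2) =>
    have hCZ : gegenCZ μ (((n + 2 : ℕ) : ℤ) - 2) = gegenC μ n := by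
      have h : ((n + 2 : ℕ) : ℤ) - 2 = ((n : ℕ) : ℤ) := by push_cast; ring
      rw [h, gegenCZ, if_pos (Int.natCast_nonneg n), Int.toNat_natCast]
    rw [hCZ, ← sub_eq_iff_eq_add]
    push_cast
    unfold gegenC
    simp only [show n + 2 + 1 = n + 3 from rfl, show (n + 2) / 2 = n / 2 + 1 from by omega]
    rw [Finset.mul_sum, Finset.mul_sum, ← Finset.sum_sub_distrib]
    have step1 : ∀ k ∈ range (n / 2 + 1 + 1),
        C (μ + (((n + 3) / 2 : ℕ) : ℂ) - 1) *
            (C ((-1:ℂ)^k / ((k.factorial : ℂ) * ((n + 2 - 2*k).factorial : ℂ)) *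
                ∏ s ∈ range (n / 2 + 1 - k), (μ + (((n + 3) / 2 : ℕ) : ℂ) + (s : ℂ))) *
              (C 2 * X) ^ (n + 2 - 2*k))
          - C (μ + ((n : ℂ) + 2) - 1) *
            (C ((-1:ℂ)^k / ((k.factorial : ℂ) * ((n + 2 - 2*k).factorial : ℂ)) *
                ∏ s ∈ range (n / 2 + 1 - k), (μ - 1 + (((n + 3) / 2 : ℕ) : ℂ) + (s : ℂ))) *
              (C 2 * X) ^ (n + 2 - 2*k))
          = C ((-(k : ℂ)) * ((-1:ℂ)^k / ((k.factorial : ℂ) * ((n + 2 - 2*k).factorial : ℂ)) *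
                ∏ s ∈ range (n / 2 + 1 - k), (μ - 1 + (((n + 3) / 2 : ℕ) : ℂ) + (s : ℂ)))) *
              (C 2 * X) ^ (n + 2 - 2*k) := by
      intro k hk
      exact aux_key_poly μ n k (by simpa using Nat.lt_succ_iff.mp (mem_range.mp hk)) _ _
    rw [Finset.sum_congr rfl step1, Finset.sum_range_succ']
    simp only [Nat.cast_zero, neg_zero, zero_mul, map_zero, add_zero]
    refine Finset.sum_congr rfl fun j hj => ?_
    have e1 : n + 2 - 2 * (j + 1) = n - 2 * j := by omega
    have e2 : n / 2 + 1 - (j + 1) = n / 2 - j := by omega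
    rw [e1, e2]
    congr 1
    have hprod : (∏ s ∈ range (n / 2 - j), (μ - 1 + (((n + 3) / 2 : ℕ) : ℂ) + (s : ℂ)))
        = ∏ s ∈ range (n / 2 - j), (μ + (((n + 1) / 2 : ℕ) : ℂ) + (s : ℂ)) := by
      refine Finset.prod_congr rfl fun s _ => ?_
      have h : (n + 3) / 2 = (n + 1) / 2 + 1 := by omega
      rw [h]; push_cast; ring
    rw [hprod]
    have hf : ((j + 1).factorial : ℂ) = ((j : ℂ) + 1) * (j.factorial : ℂ) := by
      rw [Nat.factorial_succ]; push_cast; ring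
    rw [hf, pow_succ]
    have h1 : ((j : ℂ) + 1) ≠ 0 := by
      have := Nat.cast_ne_zero (R := ℂ).mpr (Nat.succ_ne_zero j)
      push_cast at this; exact this
    have h2 : (j.factorial : ℂ) ≠ 0 := Nat.cast_ne_zero.mpr j.factorial_ne_zero
    have h3 : ((n - 2 * j).factorial : ℂ) ≠ 0 := Nat.cast_ne_zero.mpr (n - 2 * j).factorial_ne_zero
    field_simp
    congr 1
    push_cast
    rw [mul_assoc ((j : ℂ) + 1), mul_assoc ((j : ℂ) + 1), mul_div_mul_left _ _ h1]

private lemma aux_gegenCit_neg (μ : ℂ) (L : ℤ) (h : L < 0) : gegenCit μ L = 0 := by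
  rw [gegenCit, gegenCZ, if_neg (by omega), zero_comp]

private lemma aux_gegenCZ_natCast (μ : ℂ) (n : ℕ) : gegenCZ μ (n : ℤ) = gegenC μ n := by
  rw [gegenCZ, if_pos (Int.natCast_nonneg n), Int.toNat_natCast]

private lemma aux_baseZ (μ : ℂ) (L : ℤ) :
    C (μ + (((L + 1) / 2 : ℤ) : ℂ) - 1) * gegenCit μ L
      = gegenCit μ (L - 2) + C (μ + (L : ℂ) - 1) * gegenCit (μ - 1) L := by
  rcases lt_or_ge L 0 with h | h
  · rw [aux_gegenCit_neg _ _ h, aux_gegenCit_neg _ _ (by omega), aux_gegenCit_neg _ _ h]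
    ring
  · obtain ⟨n, rfl⟩ := Int.eq_ofNat_of_zero_le h
    have hb := congrArg (fun p : ℂ[X] => p.comp (C Complex.I * X)) (aux_base_nat μ n)
    simp only [add_comp, mul_comp, C_comp] at hb
    have hdiv : ((((n : ℤ) + 1) / 2 : ℤ) : ℂ) = (((n + 1) / 2 : ℕ) : ℂ) := by
      have : (((n : ℤ) + 1) / 2 : ℤ) = (((n + 1) / 2 : ℕ) : ℤ) := by omega
      rw [this]; norm_cast
    rw [hdiv]
    show C (μ + (((n + 1) / 2 : ℕ) : ℂ) - 1) * (gegenCZ μ (n : ℤ)).comp (C Complex.I * X)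
      = (gegenCZ μ ((n : ℤ) - 2)).comp (C Complex.I * X)
        + C (μ + ((n : ℤ) : ℂ) - 1) * (gegenCZ (μ - 1) (n : ℤ)).comp (C Complex.I * X)
    rw [aux_gegenCZ_natCast, aux_gegenCZ_natCast]
    push_cast
    exact hb

private lemma aux_pascal (x : ℂ) (d k : ℕ) (hk : k ≤ d) :
    (((d + 1).choose (k + 1) : ℂ)) * ∏ i ∈ range (k + 1), (x - 1 + (i : ℂ))
      = ((d.choose (k + 1) : ℂ)) * ∏ i ∈ range (k + 1), (x + (i : ℂ))
        + ((d.choose k : ℂ)) * (∏ i ∈ range k, (x + (i : ℂ))) * (x + (k : ℂ) - (d : ℂ) - 1) := by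
  have h1 : ∏ i ∈ range (k + 1), (x - 1 + (i : ℂ)) = (x - 1) * ∏ i ∈ range k, (x + (i : ℂ)) := by
    rw [Finset.prod_range_succ']
    have : (∏ i ∈ range k, (x - 1 + ((i : ℂ) + 1))) = ∏ i ∈ range k, (x + (i : ℂ)) := by
      refine Finset.prod_congr rfl fun i _ => by push_cast; ring
    push_cast
    rw [this]; ring
  have h2 := Finset.prod_range_succ (fun i : ℕ => x + (i : ℂ)) k
  have h3 : ((k : ℂ) + 1) * (d.choose (k + 1) : ℂ) = ((d : ℂ) - (k : ℂ)) * (d.choose k : ℂ) := by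
    have hc := Nat.choose_succ_right_eq d k
    have hcast : ((d.choose (k + 1) * (k + 1) : ℕ) : ℂ) = ((d.choose k * (d - k) : ℕ) : ℂ) := by
      exact_mod_cast congrArg (Nat.cast : ℕ → ℂ) hc
    push_cast [Nat.cast_sub hk] at hcast
    linear_combination hcast
  have h4 : (((d + 1).choose (k + 1) : ℕ) : ℂ) = (d.choose k : ℂ) + (d.choose (k + 1) : ℂ) := by
    rw [Nat.choose_succ_succ]; push_cast; ring
  rw [h1, h2, h4]
  linear_combination (-(∏ i ∈ range k, (x + (i : ℂ)))) * h3

end Stmt19Aux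

/-- the generalized three-term relation (Lemma A.11). -/
theorem stmt19 (μ : ℂ) (ℓ d : ℕ) :
    C (∏ i ∈ Finset.range d, (μ + (((ℓ + 1) / 2 : ℕ) : ℂ) - ((i : ℂ) + 1))) *
        gegenCit μ (ℓ : ℤ)
      = ∑ s ∈ Finset.range (d + 1),
          C ((d.choose s : ℂ) * ∏ i ∈ Finset.range s, (μ + (ℓ : ℂ) - (d : ℂ) + (i : ℂ))) *
            gegenCit (μ - (s : ℂ)) ((ℓ : ℤ) + 2 * ((s : ℤ) - (d : ℤ))) := by
  
  induction d with
  | zero => norm_num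
  | succ d ih =>
    set m : ℕ := (ℓ + 1) / 2 with hm
    have baseterm : ∀ s : ℕ,
        C (μ + ((m : ℕ) : ℂ) - ((d : ℂ) + 1)) *
            gegenCit (μ - (s : ℂ)) ((ℓ : ℤ) + 2 * ((s : ℤ) - (d : ℤ)))
          = gegenCit (μ - (s : ℂ)) ((ℓ : ℤ) + 2 * ((s : ℤ) - (d : ℤ)) - 2)
            + C (μ + (ℓ : ℂ) + (s : ℂ) - 2 * (d : ℂ) - 1) *
              gegenCit (μ - (s : ℂ) - 1) ((ℓ : ℤ) + 2 * ((s : ℤ) - (d : ℤ))) := by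
      intro s
      have hZ : ((((ℓ : ℤ) + 2 * ((s : ℤ) - (d : ℤ))) + 1) / 2 : ℤ)
          = ((m : ℕ) : ℤ) + (s : ℤ) - (d : ℤ) := by omega
      have hg : μ + ((m : ℕ) : ℂ) - ((d : ℂ) + 1)
          = μ - (s : ℂ) + (((((ℓ : ℤ) + 2 * ((s : ℤ) - (d : ℤ))) + 1) / 2 : ℤ) : ℂ) - 1 := by
        rw [hZ]; push_cast; ring
      rw [hg]
      have hb := aux_baseZ (μ - (s : ℂ)) ((ℓ : ℤ) + 2 * ((s : ℤ) - (d : ℤ)))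
      have hw : μ - (s : ℂ) + ((((ℓ : ℤ) + 2 * ((s : ℤ) - (d : ℤ))) : ℤ) : ℂ) - 1
          = μ + (ℓ : ℂ) + (s : ℂ) - 2 * (d : ℂ) - 1 := by push_cast; ring
      rw [hw] at hb
      exact hb
    rw [Finset.sum_range_succ']
    calc C (∏ i ∈ range (d + 1), (μ + ((m : ℕ) : ℂ) - ((i : ℂ) + 1))) * gegenCit μ (ℓ : ℤ)
        = C (μ + ((m : ℕ) : ℂ) - ((d : ℂ) + 1)) *
            (C (∏ i ∈ range d, (μ + ((m : ℕ) : ℂ) - ((i : ℂ) + 1))) * gegenCit μ (ℓ : ℤ)) := by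
          rw [Finset.prod_range_succ, C_mul]; ring
      _ = C (μ + ((m : ℕ) : ℂ) - ((d : ℂ) + 1)) *
            ∑ s ∈ range (d + 1),
              C ((d.choose s : ℂ) * ∏ i ∈ range s, (μ + (ℓ : ℂ) - (d : ℂ) + (i : ℂ))) *
                gegenCit (μ - (s : ℂ)) ((ℓ : ℤ) + 2 * ((s : ℤ) - (d : ℤ))) := by rw [ih]
      _ = ∑ s ∈ range (d + 1),
            (C ((d.choose s : ℂ) * ∏ i ∈ range s, (μ + (ℓ : ℂ) - (d : ℂ) + (i : ℂ))) *
                gegenCit (μ - (s : ℂ)) ((ℓ : ℤ) + 2 * ((s : ℤ) - (d : ℤ)) - 2)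
              + C (((d.choose s : ℂ) * ∏ i ∈ range s, (μ + (ℓ : ℂ) - (d : ℂ) + (i : ℂ))) *
                    (μ + (ℓ : ℂ) + (s : ℂ) - 2 * (d : ℂ) - 1)) *
                gegenCit (μ - (s : ℂ) - 1) ((ℓ : ℤ) + 2 * ((s : ℤ) - (d : ℤ)))) := by
          rw [Finset.mul_sum]
          refine Finset.sum_congr rfl fun s _ => ?_
          rw [mul_left_comm, baseterm s, mul_add, ← mul_assoc, ← C_mul]
      _ = (∑ s ∈ range (d + 1),
            C ((d.choose s : ℂ) * ∏ i ∈ range s, (μ + (ℓ : ℂ) - (d : ℂ) + (i : ℂ))) *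
                gegenCit (μ - (s : ℂ)) ((ℓ : ℤ) + 2 * ((s : ℤ) - (d : ℤ)) - 2))
          + ∑ s ∈ range (d + 1),
              C (((d.choose s : ℂ) * ∏ i ∈ range s, (μ + (ℓ : ℂ) - (d : ℂ) + (i : ℂ))) *
                    (μ + (ℓ : ℂ) + (s : ℂ) - 2 * (d : ℂ) - 1)) *
                gegenCit (μ - (s : ℂ) - 1) ((ℓ : ℤ) + 2 * ((s : ℤ) - (d : ℤ))) :=
          Finset.sum_add_distrib
      _ = ((∑ k ∈ range (d + 1), C ((d.choose (k+1) : ℂ) * ∏ i ∈ range (k+1), (μ + (ℓ : ℂ) - (d : ℂ) + (i : ℂ))) * gegenCit (μ - ((k+1 : ℕ) : ℂ)) ((ℓ : ℤ) + 2 * (((k+1 : ℕ) : ℤ) - (d : ℤ)) - 2)) + C ((d.choose (0) : ℂ) * ∏ i ∈ range (0), (μ + (ℓ : ℂ) - (d : ℂ) + (i : ℂ))) * gegenCit (μ - ((0 : ℕ) : ℂ)) ((ℓ : ℤ) + 2 * (((0 : ℕ) : ℤ) - (d : ℤ)) - 2))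
          + ∑ k ∈ range (d + 1), C (((d.choose (k) : ℂ) * ∏ i ∈ range (k), (μ + (ℓ : ℂ) - (d : ℂ) + (i : ℂ))) * (μ + (ℓ : ℂ) + ((k : ℕ) : ℂ) - 2 * (d : ℂ) - 1)) * gegenCit (μ - ((k : ℕ) : ℂ) - 1) ((ℓ : ℤ) + 2 * (((k : ℕ) : ℤ) - (d : ℤ))) := by
          have h1 := Finset.sum_range_succ (fun s : ℕ => C ((d.choose (s) : ℂ) * ∏ i ∈ range (s), (μ + (ℓ : ℂ) - (d : ℂ) + (i : ℂ))) * gegenCit (μ - ((s : ℕ) : ℂ)) ((ℓ : ℤ) + 2 * (((s : ℕ) : ℤ) - (d : ℤ)) - 2)) (d + 1)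
          have h2 := Finset.sum_range_succ' (fun s : ℕ => C ((d.choose (s) : ℂ) * ∏ i ∈ range (s), (μ + (ℓ : ℂ) - (d : ℂ) + (i : ℂ))) * gegenCit (μ - ((s : ℕ) : ℂ)) ((ℓ : ℤ) + 2 * (((s : ℕ) : ℤ) - (d : ℤ)) - 2)) (d + 1)
          simp only [Nat.choose_succ_self, Nat.cast_zero, zero_mul, map_zero, add_zero] at h1
          rw [← h1, h2]
      _ = ((∑ k ∈ range (d + 1), C ((d.choose (k+1) : ℂ) * ∏ i ∈ range (k+1), (μ + (ℓ : ℂ) - (d : ℂ) + (i : ℂ))) * gegenCit (μ - ((k+1 : ℕ) : ℂ)) ((ℓ : ℤ) + 2 * (((k+1 : ℕ) : ℤ) - (d : ℤ)) - 2))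
            + ∑ k ∈ range (d + 1), C (((d.choose (k) : ℂ) * ∏ i ∈ range (k), (μ + (ℓ : ℂ) - (d : ℂ) + (i : ℂ))) * (μ + (ℓ : ℂ) + ((k : ℕ) : ℂ) - 2 * (d : ℂ) - 1)) * gegenCit (μ - ((k : ℕ) : ℂ) - 1) ((ℓ : ℤ) + 2 * (((k : ℕ) : ℤ) - (d : ℤ)))) + C ((d.choose (0) : ℂ) * ∏ i ∈ range (0), (μ + (ℓ : ℂ) - (d : ℂ) + (i : ℂ))) * gegenCit (μ - ((0 : ℕ) : ℂ)) ((ℓ : ℤ) + 2 * (((0 : ℕ) : ℤ) - (d : ℤ)) - 2) := by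
          ring
      _ = (∑ k ∈ range (d + 1), (C ((d.choose (k+1) : ℂ) * ∏ i ∈ range (k+1), (μ + (ℓ : ℂ) - (d : ℂ) + (i : ℂ))) * gegenCit (μ - ((k+1 : ℕ) : ℂ)) ((ℓ : ℤ) + 2 * (((k+1 : ℕ) : ℤ) - (d : ℤ)) - 2)
            + C (((d.choose (k) : ℂ) * ∏ i ∈ range (k), (μ + (ℓ : ℂ) - (d : ℂ) + (i : ℂ))) * (μ + (ℓ : ℂ) + ((k : ℕ) : ℂ) - 2 * (d : ℂ) - 1)) * gegenCit (μ - ((k : ℕ) : ℂ) - 1) ((ℓ : ℤ) + 2 * (((k : ℕ) : ℤ) - (d : ℤ))))) + C ((d.choose (0) : ℂ) * ∏ i ∈ range (0), (μ + (ℓ : ℂ) - (d : ℂ) + (i : ℂ))) * gegenCit (μ - ((0 : ℕ) : ℂ)) ((ℓ : ℤ) + 2 * (((0 : ℕ) : ℤ) - (d : ℤ)) - 2) := by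
          rw [Finset.sum_add_distrib]
      _ = (∑ k ∈ range (d + 1), C (((d+1).choose (k+1) : ℂ) * ∏ i ∈ range (k+1), (μ + (ℓ : ℂ) - ((d+1 : ℕ) : ℂ) + (i : ℂ))) * gegenCit (μ - ((k+1 : ℕ) : ℂ)) ((ℓ : ℤ) + 2 * (((k+1 : ℕ) : ℤ) - ((d+1 : ℕ) : ℤ)))) + C (((d+1).choose (0) : ℂ) * ∏ i ∈ range (0), (μ + (ℓ : ℂ) - ((d+1 : ℕ) : ℂ) + (i : ℂ))) * gegenCit (μ - ((0 : ℕ) : ℂ)) ((ℓ : ℤ) + 2 * (((0 : ℕ) : ℤ) - ((d+1 : ℕ) : ℤ))) := by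
          have tail : C ((d.choose (0) : ℂ) * ∏ i ∈ range (0), (μ + (ℓ : ℂ) - (d : ℂ) + (i : ℂ))) * gegenCit (μ - ((0 : ℕ) : ℂ)) ((ℓ : ℤ) + 2 * (((0 : ℕ) : ℤ) - (d : ℤ)) - 2) = C (((d+1).choose (0) : ℂ) * ∏ i ∈ range (0), (μ + (ℓ : ℂ) - ((d+1 : ℕ) : ℂ) + (i : ℂ))) * gegenCit (μ - ((0 : ℕ) : ℂ)) ((ℓ : ℤ) + 2 * (((0 : ℕ) : ℤ) - ((d+1 : ℕ) : ℤ))) := by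
            have hz : ((ℓ : ℤ) + 2 * ((((0:ℕ) : ℕ) : ℤ) - (d : ℤ)) - 2)
                = ((ℓ : ℤ) + 2 * ((((0:ℕ) : ℕ) : ℤ) - ((d+1 : ℕ) : ℤ))) := by push_cast; ring
            rw [hz]; norm_num
          have head : ∀ k ∈ range (d + 1),
              C ((d.choose (k+1) : ℂ) * ∏ i ∈ range (k+1), (μ + (ℓ : ℂ) - (d : ℂ) + (i : ℂ))) * gegenCit (μ - ((k+1 : ℕ) : ℂ)) ((ℓ : ℤ) + 2 * (((k+1 : ℕ) : ℤ) - (d : ℤ)) - 2) + C (((d.choose (k) : ℂ) * ∏ i ∈ range (k), (μ + (ℓ : ℂ) - (d : ℂ) + (i : ℂ))) * (μ + (ℓ : ℂ) + ((k : ℕ) : ℂ) - 2 * (d : ℂ) - 1)) * gegenCit (μ - ((k : ℕ) : ℂ) - 1) ((ℓ : ℤ) + 2 * (((k : ℕ) : ℤ) - (d : ℤ)))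
                = C (((d+1).choose (k+1) : ℂ) * ∏ i ∈ range (k+1), (μ + (ℓ : ℂ) - ((d+1 : ℕ) : ℂ) + (i : ℂ))) * gegenCit (μ - ((k+1 : ℕ) : ℂ)) ((ℓ : ℤ) + 2 * (((k+1 : ℕ) : ℤ) - ((d+1 : ℕ) : ℤ))) := by
            intro k hk
            have hk' : k ≤ d := by have := mem_range.mp hk; omega
            have hU : ((ℓ : ℤ) + 2 * (((k+1 : ℕ) : ℤ) - (d : ℤ)) - 2)
                = ((ℓ : ℤ) + 2 * (((k+1 : ℕ) : ℤ) - ((d+1 : ℕ) : ℤ))) := by push_cast; ring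
            have hV1 : μ - ((k : ℕ) : ℂ) - 1 = μ - ((k+1 : ℕ) : ℂ) := by push_cast; ring
            have hV2 : ((ℓ : ℤ) + 2 * (((k : ℕ) : ℤ) - (d : ℤ)))
                = ((ℓ : ℤ) + 2 * (((k+1 : ℕ) : ℤ) - ((d+1 : ℕ) : ℤ))) := by push_cast; ring
            rw [hU, hV1, hV2, ← add_mul, ← C_add]
            have hQ : (∏ i ∈ range (k+1), (μ + (ℓ : ℂ) - ((d+1 : ℕ) : ℂ) + (i : ℂ)))
                = ∏ i ∈ range (k+1), (μ + (ℓ : ℂ) - (d : ℂ) - 1 + (i : ℂ)) :=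
              Finset.prod_congr rfl fun i _ => by push_cast; ring
            have hsc : ((d.choose (k+1) : ℂ) * ∏ i ∈ range (k+1), (μ + (ℓ : ℂ) - (d : ℂ) + (i : ℂ))) + ((d.choose (k) : ℂ) * ∏ i ∈ range (k), (μ + (ℓ : ℂ) - (d : ℂ) + (i : ℂ))) * (μ + (ℓ : ℂ) + ((k : ℕ) : ℂ) - 2 * (d : ℂ) - 1) = (((d+1).choose (k+1) : ℂ) * ∏ i ∈ range (k+1), (μ + (ℓ : ℂ) - ((d+1 : ℕ) : ℂ) + (i : ℂ))) := by
              have hx := aux_pascal (μ + (ℓ : ℂ) - (d : ℂ)) d k hk'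
              rw [hQ]
              push_cast
              push_cast at hx
              linear_combination -hx
            rw [hsc]
          rw [Finset.sum_congr rfl head, tail]
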